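/- Correctness of the MILP-derived policy abstraction bounds. Let f : S → ℝ^k (k ≥ 1) assign a logit vector to each state, and suppose the policy probabilities are given by π_j(s) = softmax(f(s))^j. Let ŝ ⊆ S and suppose x_lb, x_ub ∈ ℝ^k satisfy x_lb^i ≤ f(s)^i ≤ x_ub^i for every s ∈ ŝ and every i. Fix j and define w_ub ∈ ℝ^k by w_ub^j = x_ub^j, w_ub^i = x_lb^i for i ≠ j, and w_lb ∈ ℝ^k by w_lb^j = x_lb^j, w_lb^i = x_ub^i for i ≠ j. Then softmax(w_lb)^j ≤ π_j(s) ≤ softmax(w_ub)^j for every s ∈ ŝ. -/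
import Mathlib


/-- The softmax function on logit vectors in `ℝ^k`:
`softmax z j = exp (z j) / Σ i, exp (z i)`. -/
noncomputable def softmax {k : ℕ} (z : Fin k → ℝ) (j : Fin k) : ℝ :=
  Real.exp (z j) / ∑ i, Real.exp (z i)

lemma softmax_eq_one_div {k : ℕ} (z : Fin k → ℝ) (j : Fin k) :
    softmax z j = 1 / ∑ i, Real.exp (z i - z j) := by
  unfold softmax
  have hs : (∑ i, Real.exp (z i - z j)) = (∑ i, Real.exp (z i)) / Real.exp (z j) := by
    rw [Finset.sum_div]
    exact Finset.sum_congr rfl fun i _ => by rw [Real.exp_sub]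
  rw [hs, one_div_div]

lemma sum_exp_pos {k : ℕ} (hk : 1 ≤ k) (z : Fin k → ℝ) :
    0 < ∑ i, Real.exp (z i) := by
  apply Finset.sum_pos (fun i _ => Real.exp_pos _)
  exact Finset.univ_nonempty_iff.mpr (Fin.pos_iff_nonempty.mp hk)

lemma softmax_mono {k : ℕ} (hk : 1 ≤ k) (z w : Fin k → ℝ) (j : Fin k)
    (hj : z j ≤ w j) (hi : ∀ i, i ≠ j → w i ≤ z i) :
    softmax z j ≤ softmax w j := by
  rw [softmax_eq_one_div, softmax_eq_one_div]
  have hpos : 0 < ∑ i, Real.exp (w i - w j) := sum_exp_pos hk _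
  apply one_div_le_one_div_of_le hpos
  apply Finset.sum_le_sum
  intro i _
  apply Real.exp_le_exp.mpr
  by_cases h : i = j
  · subst h; simp
  · have := hi i h
    linarith

theorem policy_abstraction_bounds_correct
    {S : Type*} {k : ℕ} (hk : 1 ≤ k)
    (f : S → Fin k → ℝ)
    (π : S → Fin k → ℝ)
    (hπ : ∀ s j, π s j = softmax (f s) j)
    (sh : Set S) (x_lb x_ub : Fin k → ℝ)
    (hbox : ∀ s ∈ sh, ∀ i, x_lb i ≤ f s i ∧ f s i ≤ x_ub i)
    (j : Fin k)
    (w_ub : Fin k → ℝ) (hwubj : w_ub j = x_ub j) (hwubi : ∀ i, i ≠ j → w_ub i = x_lb i)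
    (w_lb : Fin k → ℝ) (hwlbj : w_lb j = x_lb j) (hwlbi : ∀ i, i ≠ j → w_lb i = x_ub i) :
    ∀ s ∈ sh, softmax w_lb j ≤ π s j ∧ π s j ≤ softmax w_ub j := by
  intro s hs
  rw [hπ]
  constructor
  · apply softmax_mono hk
    · rw [hwlbj]; exact (hbox s hs j).1
    · intro i hij; rw [hwlbi i hij]; exact (hbox s hs i).2
  · apply softmax_mono hk
    · rw [hwubj]; exact (hbox s hs j).2
    · intro i hij; rw [hwubi i hij]; exact (hbox s hs i).1
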